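/- For every permutation σ of the set I_k of monic irreducible polynomials of degree k over F_q, there exists a polynomial P ∈ F_q[x] of degree less than q^k permuting F_{q^k} such that for every f ∈ I_k with root α, σ(f) is the minimal polynomial of P(α) over F_q. -/

import Mathlib

open Polynomial

set_option linter.unusedSectionVars false

namespace Stmt7Aux

variable {F : Type*} [Field F] [Fintype F] {E : Type*} [Field E] [Algebra F E] [Fintype E]

/-- The Frobenius `x ↦ x ^ (card F)` as an `F`-algebra endomorphism of `E`. -/
lemma exists_frob : ∃ ψ : E →ₐ[F] E, ∀ x : E, ψ x = x ^ Fintype.card F := by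
  obtain ⟨n, hp, hq⟩ := FiniteField.card F (ringChar F)
  haveI : Fact (ringChar F).Prime := ⟨hp⟩
  haveI : CharP E (ringChar F) :=
    charP_of_injective_algebraMap (algebraMap F E).injective (ringChar F)
  refine ⟨⟨iterateFrobenius E (ringChar F) n, fun a => ?_⟩, fun x => by
    simp [iterateFrobenius_def, ← hq]⟩
  show iterateFrobenius E (ringChar F) n (algebraMap F E a) = algebraMap F E a
  rw [iterateFrobenius_def, ← hq, ← map_pow, FiniteField.pow_card]

lemma exists_frob_pow (d : ℕ) :
    ∃ ψ : E →ₐ[F] E, ∀ x : E, ψ x = x ^ Fintype.card F ^ d := by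
  induction d with
  | zero => exact ⟨AlgHom.id F E, by simp⟩
  | succ n ih =>
    obtain ⟨ψ, hψ⟩ := ih
    obtain ⟨φ, hφ⟩ := exists_frob (F := F) (E := E)
    exact ⟨φ.comp ψ, fun x => by simp [hψ, hφ, pow_succ, pow_mul]⟩

lemma frob_root {f : Polynomial F} {x : E} (hx : aeval x f = 0) (i : ℕ) :
    aeval (x ^ Fintype.card F ^ i) f = 0 := by
  obtain ⟨ψ, hψ⟩ := exists_frob_pow (F := F) (E := E) i
  rw [← hψ, aeval_algHom_apply, hx, map_zero]

/-- Elements fixed by Frobenius are exactly the image of `F`. -/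
lemma pow_card_eq_iff {x : E} :
    x ^ Fintype.card F = x ↔ ∃ a : F, algebraMap F E a = x := by
  classical
  constructor
  · intro h
    set s : Finset E := Finset.univ.image (algebraMap F E) with hs
    set t : Finset E := Finset.univ.filter (fun y : E => y ^ Fintype.card F = y) with ht
    have hne : (X ^ Fintype.card F - X : E[X]) ≠ 0 :=
      FiniteField.X_pow_card_sub_X_ne_zero E Fintype.one_lt_card
    have hst : s ⊆ t := by
      intro y hy
      rw [hs] at hy
      obtain ⟨a, -, rfl⟩ := Finset.mem_image.mp hy
      rw [ht, Finset.mem_filter]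
      exact ⟨Finset.mem_univ _, by rw [← map_pow, FiniteField.pow_card]⟩
    have hcard_s : s.card = Fintype.card F := by
      rw [hs, Finset.card_image_of_injective _ (algebraMap F E).injective, Finset.card_univ]
    have htsub : t ⊆ (X ^ Fintype.card F - X : E[X]).roots.toFinset := by
      intro y hy
      rw [ht, Finset.mem_filter] at hy
      rw [Multiset.mem_toFinset, mem_roots hne]
      simp [IsRoot, sub_eq_zero, hy.2]
    have hcard_t : t.card ≤ Fintype.card F := by
      calc t.card ≤ (X ^ Fintype.card F - X : E[X]).roots.toFinset.card :=
            Finset.card_le_card htsub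
        _ ≤ Multiset.card (X ^ Fintype.card F - X : E[X]).roots :=
            Multiset.toFinset_card_le _
        _ ≤ (X ^ Fintype.card F - X : E[X]).natDegree := Polynomial.card_roots' _
        _ = Fintype.card F :=
            FiniteField.X_pow_card_sub_X_natDegree_eq E Fintype.one_lt_card
    have hts : s = t := Finset.eq_of_subset_of_card_le hst (hcard_t.trans hcard_s.ge)
    have hxt : x ∈ t := by rw [ht, Finset.mem_filter]; exact ⟨Finset.mem_univ _, h⟩
    rw [← hts, hs] at hxt
    obtain ⟨a, -, ha⟩ := Finset.mem_image.mp hxt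
    exact ⟨a, ha⟩
  · rintro ⟨a, rfl⟩
    rw [← map_pow, FiniteField.pow_card]

variable (k : ℕ)

/-- Key lemma: an element of degree `k` is not fixed by a proper power of Frobenius. -/
lemma pow_ne (hE : Fintype.card E = Fintype.card F ^ k) {x : E}
    (hx : (minpoly F x).natDegree = k) {d : ℕ} (hd0 : 0 < d) (hdk : d < k) :
    x ^ Fintype.card F ^ d ≠ x := by
  intro hfix
  have hk : 0 < k := hd0.trans hdk
  have hint : IsIntegral F x := IsIntegral.of_finite F x
  obtain ⟨φ, hφ⟩ := exists_frob_pow (F := F) (E := E) d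
  have hfr : Module.finrank F E = k := by
    have h1 : Fintype.card E = Fintype.card F ^ Module.finrank F E := Module.card_eq_pow_finrank
    have := h1.symm.trans hE
    exact Nat.pow_right_injective Fintype.one_lt_card this
  have hfin : Module.finrank F (Algebra.adjoin F ({x} : Set E)) = k := by
    rw [← IntermediateField.adjoin_simple_toSubalgebra_of_isAlgebraic hint.isAlgebraic]
    exact (IntermediateField.adjoin.finrank hint).trans hx
  have hadj : Algebra.adjoin F ({x} : Set E) = ⊤ := by
    rw [← Algebra.toSubmodule_eq_top]
    exact Submodule.eq_top_of_finrank_eq (hfin.trans hfr.symm)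
  have hfixall : ∀ y : E, y ^ Fintype.card F ^ d = y := by
    have heq : AlgHom.equalizer φ (AlgHom.id F E) = ⊤ :=
      top_unique (hadj ▸ Algebra.adjoin_le (by
        rintro y rfl
        show φ y = y
        rw [hφ, hfix]))
    intro y
    have hy : y ∈ AlgHom.equalizer φ (AlgHom.id F E) := heq ▸ trivial
    have : φ y = y := hy
    rwa [hφ] at this
  have h1lt : 1 < Fintype.card F ^ d := Nat.one_lt_pow hd0.ne' Fintype.one_lt_card
  have hzero : (X ^ Fintype.card F ^ d - X : E[X]) = 0 := by
    apply Polynomial.eq_zero_of_natDegree_lt_card_of_eval_eq_zero _ Function.injective_id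
    · intro y
      simp [sub_eq_zero, hfixall y]
    · rw [FiniteField.X_pow_card_sub_X_natDegree_eq E h1lt, hE]
      exact Nat.pow_lt_pow_right Fintype.one_lt_card hdk
  exact FiniteField.X_pow_card_sub_X_ne_zero E h1lt hzero

lemma pow_pow_inj (hE : Fintype.card E = Fintype.card F ^ k) {x : E}
    (hx : (minpoly F x).natDegree = k) {i j : ℕ} (hi : i < k) (hj : j < k)
    (h : x ^ Fintype.card F ^ i = x ^ Fintype.card F ^ j) : i = j := by
  have hcard : ∀ z : E, z ^ Fintype.card F ^ k = z := by
    intro z; rw [← hE]; exact FiniteField.pow_card z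
  have key : ∀ a b : ℕ, a < b → b < k → x ^ Fintype.card F ^ a = x ^ Fintype.card F ^ b → False := by
    intro a b hab hbk hxab
    have hfix : x ^ Fintype.card F ^ (b - a) = x := by
      have h1 : (x ^ Fintype.card F ^ a) ^ Fintype.card F ^ (k - a) = x := by
        rw [← pow_mul, ← pow_add, Nat.add_sub_cancel' (hab.trans hbk).le, hcard]
      have h2 : (x ^ Fintype.card F ^ b) ^ Fintype.card F ^ (k - a) = x ^ Fintype.card F ^ (b - a) := by
        rw [← pow_mul, ← pow_add]
        have hba : b + (k - a) = (b - a) + k := by omega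
        rw [hba, pow_add, pow_mul, hcard]
      rw [hxab, h2] at h1
      exact h1
    exact pow_ne k hE hx (by omega) (by omega) hfix
  rcases lt_trichotomy i j with hlt | heq | hgt
  · exact absurd (key i j hlt hj h) (fun h => h)
  · exact heq
  · exact absurd (key j i hgt hi h.symm) (fun h => h)

lemma pow_agree (hE : Fintype.card E = Fintype.card F ^ k) {x : E}
    (hx : (minpoly F x).natDegree = k) {i j : ℕ} (hi : i ≤ k) (hj : j ≤ k)
    (h : x ^ Fintype.card F ^ i = x ^ Fintype.card F ^ j) (y : E) :
    y ^ Fintype.card F ^ i = y ^ Fintype.card F ^ j := by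
  have hycard : ∀ z : E, z ^ Fintype.card F ^ k = z := by
    intro z; rw [← hE]; exact FiniteField.pow_card z
  -- reduce to d = j - i (wlog)
  have main : ∀ a b : ℕ, a ≤ b → b ≤ k →
      x ^ Fintype.card F ^ a = x ^ Fintype.card F ^ b →
      y ^ Fintype.card F ^ a = y ^ Fintype.card F ^ b := by
    intro a b hab hbk hxab
    set d := b - a with hd
    have hxd : x ^ Fintype.card F ^ d = x := by
      have h1 : (x ^ Fintype.card F ^ a) ^ Fintype.card F ^ (k - a) = x := by
        rw [← pow_mul, ← pow_add, Nat.add_sub_cancel' (hab.trans hbk), hycard]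
      have h2 : (x ^ Fintype.card F ^ b) ^ Fintype.card F ^ (k - a) = x ^ Fintype.card F ^ d := by
        rw [← pow_mul, ← pow_add]
        have hba : b + (k - a) = d + k := by omega
        rw [hba, pow_add, pow_mul, hycard]
      rw [hxab, h2] at h1
      exact h1
    have hyd : y ^ Fintype.card F ^ d = y := by
      rcases Nat.eq_zero_or_pos d with h0 | hpos
      · rw [h0, pow_zero, pow_one]
      · rcases eq_or_lt_of_le (show d ≤ k by omega) with hdk | hdk
        · rw [hdk]; exact hycard y
        · exact absurd hxd (pow_ne k hE hx hpos hdk)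
    have hba : b = d + a := by omega
    rw [hba, pow_add, pow_mul, hyd]
  rcases le_total i j with hij | hji
  · exact main i j hij hj h
  · exact (main j i hji hi h.symm).symm

/-- Every monic irreducible polynomial of degree `k` has a root in `E`. -/
lemma exists_root (hk : 0 < k) (hE : Fintype.card E = Fintype.card F ^ k)
    {f : Polynomial F} (hm : f.Monic) (hi : Irreducible f) (hd : f.natDegree = k) :
    ∃ α : E, aeval α f = 0 := by
  classical
  haveI : Fact (Irreducible f) := ⟨hi⟩
  have hf0 : f ≠ 0 := hm.ne_zero
  set K := AdjoinRoot f
  let pb : PowerBasis F K := AdjoinRoot.powerBasis hf0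
  haveI : Fintype K := Module.fintypeOfFintype pb.basis
  have hcardK : Fintype.card K = Fintype.card F ^ k := by
    rw [Module.card_fintype pb.basis, Fintype.card_fin, AdjoinRoot.powerBasis_dim, hd]
  have hmin : minpoly F (AdjoinRoot.root f) = f := by
    rw [AdjoinRoot.minpoly_root hf0, hm.leadingCoeff, inv_one, map_one, mul_one]
  have hdvd : f ∣ (X ^ Fintype.card F ^ k - X : Polynomial F) := by
    rw [← hmin]
    apply minpoly.dvd
    rw [map_sub, map_pow, aeval_X, ← hcardK, FiniteField.pow_card, sub_self]
  have hdvdE : (f.map (algebraMap F E)) ∣ (X ^ Fintype.card E - X : E[X]) := by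
    have := Polynomial.map_dvd (algebraMap F E) hdvd
    rwa [Polynomial.map_sub, Polynomial.map_pow, Polynomial.map_X, ← hE] at this
  have h1lt : 1 < Fintype.card E := Fintype.one_lt_card
  have hne : (X ^ Fintype.card E - X : E[X]) ≠ 0 := FiniteField.X_pow_card_sub_X_ne_zero E h1lt
  have hsplits : Splits (X ^ Fintype.card E - X : E[X]) := by
    rw [Polynomial.splits_iff_card_roots, FiniteField.roots_X_pow_card_sub_X,
      FiniteField.X_pow_card_sub_X_natDegree_eq E h1lt]
    simp
  have hfsplits : Splits (f.map (algebraMap F E)) :=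
    hsplits.of_dvd hne hdvdE
  have hdegne : (f.map (algebraMap F E)).degree ≠ 0 := by
    rw [Polynomial.degree_map, Polynomial.degree_eq_natDegree hf0, hd]
    exact_mod_cast hk.ne'
  obtain ⟨α, hα⟩ := hfsplits.exists_eval_eq_zero hdegne
  refine ⟨α, ?_⟩
  rw [aeval_def, ← Polynomial.eval_map]
  exact hα

lemma root_orbit (hk : 0 < k) (hE : Fintype.card E = Fintype.card F ^ k)
    {f : Polynomial F} (hm : f.Monic) (hi : Irreducible f) (hd : f.natDegree = k)
    {α β : E} (hα : aeval α f = 0) (hβ : aeval β f = 0) :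
    ∃ i, i < k ∧ β = α ^ Fintype.card F ^ i := by
  classical
  have hminα : minpoly F α = f := (minpoly.eq_of_irreducible_of_monic hi hα hm).symm
  have hdegα : (minpoly F α).natDegree = k := by rw [hminα, hd]
  set rootF : Finset E := Finset.univ.filter (fun x : E => aeval x f = 0) with hrootF
  set orb : Finset E :=
    Finset.image (fun i : Fin k => α ^ Fintype.card F ^ (i : ℕ)) Finset.univ with horb
  have hinj : Function.Injective (fun i : Fin k => α ^ Fintype.card F ^ (i : ℕ)) := by
    intro i j hij
    exact Fin.ext (pow_pow_inj k hE hdegα i.2 j.2 hij)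
  have horbcard : orb.card = k := by
    rw [horb, Finset.card_image_of_injective _ hinj, Finset.card_univ, Fintype.card_fin]
  have hsub : orb ⊆ rootF := by
    intro y hy
    rw [horb] at hy
    obtain ⟨i, -, rfl⟩ := Finset.mem_image.mp hy
    rw [hrootF, Finset.mem_filter]
    exact ⟨Finset.mem_univ _, frob_root hα i⟩
  have hmapne : f.map (algebraMap F E) ≠ 0 := (hm.map (algebraMap F E)).ne_zero
  have hrsub : rootF ⊆ (f.map (algebraMap F E)).roots.toFinset := by
    intro y hy
    rw [hrootF, Finset.mem_filter] at hy
    rw [Multiset.mem_toFinset, mem_roots hmapne]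
    show eval y (f.map (algebraMap F E)) = 0
    rw [Polynomial.eval_map, ← aeval_def]
    exact hy.2
  have hcardroot : rootF.card ≤ k := by
    calc rootF.card ≤ (f.map (algebraMap F E)).roots.toFinset.card := Finset.card_le_card hrsub
      _ ≤ Multiset.card (f.map (algebraMap F E)).roots := Multiset.toFinset_card_le _
      _ ≤ (f.map (algebraMap F E)).natDegree := Polynomial.card_roots' _
      _ = k := by rw [Polynomial.natDegree_map, hd]
  have heq : orb = rootF :=
    Finset.eq_of_subset_of_card_le hsub (hcardroot.trans_eq horbcard.symm)
  have hβmem : β ∈ orb := by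
    rw [heq, hrootF, Finset.mem_filter]; exact ⟨Finset.mem_univ _, hβ⟩
  rw [horb] at hβmem
  obtain ⟨i, -, hi'⟩ := Finset.mem_image.mp hβmem
  exact ⟨i, i.2, hi'.symm⟩

lemma exists_poly (g : E → E)
    (hg : ∀ x : E, g (x ^ Fintype.card F) = g x ^ Fintype.card F) :
    ∃ P : Polynomial F, P.natDegree < Fintype.card E ∧ ∀ x : E, aeval x P = g x := by
  classical
  obtain ⟨ψ, hψ⟩ := exists_frob (F := F) (E := E)
  set Q : E[X] := Lagrange.interpolate Finset.univ id g with hQ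
  have hinj : Set.InjOn (id : E → E) ↑(Finset.univ : Finset E) := Function.injective_id.injOn
  have heval : ∀ x : E, Q.eval x = g x := fun x => by
    have := Lagrange.eval_interpolate_at_node g hinj (Finset.mem_univ x)
    simpa [hQ] using this
  have hdeg : Q.degree < (Fintype.card E : ℕ) := by
    have := Lagrange.degree_interpolate_lt g hinj
    simpa [hQ] using this
  have hndeg : Q.natDegree < Fintype.card E := by
    rcases eq_or_ne Q 0 with h0 | h0
    · rw [h0]; simpa using Fintype.card_pos
    · exact (Polynomial.natDegree_lt_iff_degree_lt h0).mpr hdeg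
  have hψsurj : Function.Surjective ψ :=
    Finite.injective_iff_surjective.mp ψ.injective
  have hmap : Q.map (ψ : E →+* E) = Q := by
    have hev : ∀ y : E, (Q.map (ψ : E →+* E) - Q).eval y = 0 := by
      intro y
      obtain ⟨x, rfl⟩ := hψsurj y
      have h1 : (Q.map (ψ : E →+* E)).eval (ψ x) = ψ (Q.eval x) := by
        rw [Polynomial.eval_map]
        exact Polynomial.eval₂_at_apply (ψ : E →+* E) x
      rw [Polynomial.eval_sub, h1, heval, heval, sub_eq_zero, hψ, ← hg, ← hψ x]
    have hd2 : (Q.map (ψ : E →+* E) - Q).natDegree < Fintype.card E := by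
      apply lt_of_le_of_lt (Polynomial.natDegree_sub_le _ _)
      rw [Polynomial.natDegree_map]
      simpa using hndeg
    have hz := Polynomial.eq_zero_of_natDegree_lt_card_of_eval_eq_zero _
      Function.injective_id hev hd2
    exact sub_eq_zero.mp hz
  have hcoeff : ∀ n, Q.coeff n ∈ Set.range (algebraMap F E) := by
    intro n
    have h1 : ψ (Q.coeff n) = Q.coeff n := by
      conv_rhs => rw [← hmap]
      rw [Polynomial.coeff_map]
      rfl
    have h2 : Q.coeff n ^ Fintype.card F = Q.coeff n := by rw [← hψ]; exact h1
    exact pow_card_eq_iff.mp h2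
  obtain ⟨P, hP⟩ := (Polynomial.mem_lifts _).mp
    ((Polynomial.lifts_iff_coeff_lifts Q).mpr hcoeff)
  have hPQ : P.natDegree = Q.natDegree := by rw [← hP, Polynomial.natDegree_map]
  refine ⟨P, hPQ ▸ hndeg, fun x => ?_⟩
  rw [aeval_def, ← Polynomial.eval_map, hP, heval]

end Stmt7Aux

set_option maxHeartbeats 1000000 in
/-- every permutation `σ` of the set of monic irreducible polynomials of
degree `k` over `F_q` is induced by some permutation polynomial `P` of `F_{q^k}` with
coefficients in `F_q` and degree `< q^k`. -/
theorem stmt_7 (F : Type*) [Field F] [Fintype F]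
    (E : Type*) [Field E] [Algebra F E] [Fintype E]
    (k : ℕ) (hk : 0 < k) (hE : Fintype.card E = Fintype.card F ^ k)
    (σ : Polynomial F → Polynomial F)
    (hσ : Set.BijOn σ {f : Polynomial F | f.Monic ∧ Irreducible f ∧ f.natDegree = k}
      {f : Polynomial F | f.Monic ∧ Irreducible f ∧ f.natDegree = k}) :
    ∃ P : Polynomial F, P.natDegree < Fintype.card F ^ k ∧
      Function.Bijective (fun c : E => Polynomial.aeval c P) ∧
      ∀ f : Polynomial F, f.Monic → Irreducible f → f.natDegree = k →
        ∀ α : E, Polynomial.aeval α f = 0 → σ f = minpoly F (Polynomial.aeval α P) := by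
  classical
  set I : Set (Polynomial F) := {f | f.Monic ∧ Irreducible f ∧ f.natDegree = k} with hIdef
  have hint : ∀ x : E, IsIntegral F x := fun x => IsIntegral.of_finite F x
  have hminI : ∀ x : E, (minpoly F x).natDegree = k → minpoly F x ∈ I := fun x hx =>
    ⟨minpoly.monic (hint x), minpoly.irreducible (hint x), hx⟩
  have hminroot : ∀ f : Polynomial F, f.Monic → Irreducible f →
      ∀ x : E, aeval x f = 0 → minpoly F x = f :=
    fun f hm hi x hx => (minpoly.eq_of_irreducible_of_monic hi hx hm).symm
  have hroot : ∀ f ∈ I, ∃ α : E, aeval α f = 0 := fun f hf =>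
    Stmt7Aux.exists_root k hk hE hf.1 hf.2.1 hf.2.2
  let ρ : Polynomial F → E := fun f => if h : ∃ α : E, aeval α f = 0 then h.choose else 0
  have hρ : ∀ f ∈ I, aeval (ρ f) f = 0 := by
    intro f hf
    have h := hroot f hf
    simp only [ρ, dif_pos h]
    exact h.choose_spec
  have hρdeg : ∀ f ∈ I, (minpoly F (ρ f)).natDegree = k := by
    intro f hf
    rw [hminroot f hf.1 hf.2.1 _ (hρ f hf), hf.2.2]
  have hσI : ∀ f ∈ I, σ f ∈ I := fun f hf => hσ.mapsTo hf
  have horb : ∀ x : E, (minpoly F x).natDegree = k →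
      ∃ i, i < k ∧ x = ρ (minpoly F x) ^ Fintype.card F ^ i := by
    intro x hx
    have hfI := hminI x hx
    obtain ⟨i, hik, hi⟩ := Stmt7Aux.root_orbit k hk hE hfI.1 hfI.2.1 hx
      (hρ _ hfI) (minpoly.aeval F x)
    exact ⟨i, hik, hi⟩
  let g : E → E := fun x =>
    if h : (minpoly F x).natDegree = k then
      ρ (σ (minpoly F x)) ^ Fintype.card F ^ (horb x h).choose
    else x
  have hspec : ∀ (x : E), (minpoly F x).natDegree = k →
      ∃ i, i < k ∧ x = ρ (minpoly F x) ^ Fintype.card F ^ i ∧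
        g x = ρ (σ (minpoly F x)) ^ Fintype.card F ^ i := by
    intro x h
    refine ⟨(horb x h).choose, (horb x h).choose_spec.1, (horb x h).choose_spec.2, ?_⟩
    simp only [g, dif_pos h]
  have hgN : ∀ x : E, (minpoly F x).natDegree ≠ k → g x = x := by
    intro x h; simp only [g, dif_neg h]
  have hgmin : ∀ (x : E) (h : (minpoly F x).natDegree = k),
      minpoly F (g x) = σ (minpoly F x) := by
    intro x h
    have hσf := hσI _ (hminI x h)
    obtain ⟨i, -, -, hgxe⟩ := hspec x h
    have hroot' : aeval (g x) (σ (minpoly F x)) = 0 := by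
      rw [hgxe]
      exact Stmt7Aux.frob_root (hρ _ hσf) _
    exact hminroot _ hσf.1 hσf.2.1 _ hroot'
  have hmin_pow : ∀ x : E, minpoly F (x ^ Fintype.card F) = minpoly F x := by
    intro x
    exact hminroot _ (minpoly.monic (hint x)) (minpoly.irreducible (hint x)) _
      (by simpa using Stmt7Aux.frob_root (minpoly.aeval F x) 1)
  -- injectivity of g
  have hginj : Function.Injective g := by
    intro x y hxy
    by_cases hx : (minpoly F x).natDegree = k <;> by_cases hy : (minpoly F y).natDegree = k
    · have hfx := hminI x hx
      have hfy := hminI y hy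
      have h1 : σ (minpoly F x) = σ (minpoly F y) := by
        rw [← hgmin x hx, ← hgmin y hy, hxy]
      have h2 : minpoly F x = minpoly F y := hσ.injOn hfx hfy h1
      obtain ⟨i, hik, hxe, hgxe⟩ := hspec x hx
      obtain ⟨j, hjk, hye, hgye⟩ := hspec y hy
      have hρσ : (minpoly F (ρ (σ (minpoly F x)))).natDegree = k := hρdeg _ (hσI _ hfx)
      rw [hgxe, hgye, ← h2] at hxy
      have hij : i = j := Stmt7Aux.pow_pow_inj k hE hρσ hik hjk hxy
      rw [hxe, hye, ← h2, hij]
    · exfalso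
      have h1 : (minpoly F (g x)).natDegree = k := by
        rw [hgmin x hx]; exact (hσI _ (hminI x hx)).2.2
      rw [hxy, hgN y hy] at h1
      exact hy h1
    · exfalso
      have h1 : (minpoly F (g y)).natDegree = k := by
        rw [hgmin y hy]; exact (hσI _ (hminI y hy)).2.2
      rw [← hxy, hgN x hx] at h1
      exact hx h1
    · rwa [hgN x hx, hgN y hy] at hxy
  -- Frobenius-equivariance of g
  have hgequi : ∀ x : E, g (x ^ Fintype.card F) = g x ^ Fintype.card F := by
    intro x
    have hmp := hmin_pow x
    by_cases hx : (minpoly F x).natDegree = k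
    · have hx' : (minpoly F (x ^ Fintype.card F)).natDegree = k := by rw [hmp]; exact hx
      have hfI := hminI x hx
      obtain ⟨i, hik, hxe, hgxe⟩ := hspec x hx
      obtain ⟨j, hjk, hye, hgye⟩ := hspec (x ^ Fintype.card F) hx'
      rw [hmp] at hye hgye
      have hρf : (minpoly F (ρ (minpoly F x))).natDegree = k := hρdeg _ hfI
      have e1 : ρ (minpoly F x) ^ Fintype.card F ^ j
          = ρ (minpoly F x) ^ Fintype.card F ^ (i + 1) := by
        have h2 : x ^ Fintype.card F
            = ρ (minpoly F x) ^ Fintype.card F ^ (i + 1) := by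
          conv_lhs => rw [hxe]
          rw [← pow_mul, ← pow_succ]
        rw [← hye, h2]
      have e2 : ρ (σ (minpoly F x)) ^ Fintype.card F ^ j
          = ρ (σ (minpoly F x)) ^ Fintype.card F ^ (i + 1) :=
        Stmt7Aux.pow_agree k hE hρf hjk.le (by omega) e1 _
      rw [hgye, hgxe, e2, ← pow_mul, ← pow_succ]
    · have hx' : (minpoly F (x ^ Fintype.card F)).natDegree ≠ k := by rw [hmp]; exact hx
      rw [hgN _ hx', hgN _ hx]
  obtain ⟨P, hPdeg, hPeval⟩ := Stmt7Aux.exists_poly g hgequi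
  have hfun : (fun c : E => aeval c P) = g := funext hPeval
  refine ⟨P, by rwa [hE] at hPdeg, ?_, ?_⟩
  · rw [hfun]
    exact Finite.injective_iff_bijective.mp hginj
  · intro f hm hi hd α hα
    have hminα : minpoly F α = f := hminroot f hm hi α hα
    have hdegα : (minpoly F α).natDegree = k := by rw [hminα, hd]
    rw [hPeval α, hgmin α hdegα, hminα]
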